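/- Let p > 0, n a positive integer, α ∈ ℕⁿ, and t > 0. Then ∫_{{w ∈ ℂⁿ : ‖w‖^{2p} < t}} |w^α|² dV(w) = πⁿ · (∏ᵢ Γ(αᵢ+1)) · Γ((|α|+n)/p) / (p · Γ(|α|+n) · Γ((|α|+n)/p + 1)) · t^{(|α|+n)/p}, where |α| = α₁+⋯+αₙ and w^α = w₁^{α₁}⋯wₙ^{αₙ}. -/

import Mathlib

open MeasureTheory Real

/-- Lebesgue measure on `ℂⁿ` with the Euclidean (Hermitian) norm. -/
noncomputable instance withLpMeasureSpace {X : Type*} [MeasureTheory.MeasureSpace X]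
    (p : ENNReal) : MeasureTheory.MeasureSpace (WithLp p X) where
  toMeasurableSpace := WithLp.measurableSpace p X
  volume := (MeasureTheory.volume : MeasureTheory.Measure X).map (WithLp.toLp p)

namespace MonomialSublevelAux

open Set Filter

variable {n : ℕ} (α : Fin n → ℕ)

private lemma phi_nonneg (w : Fin n → ℂ) : 0 ≤ ∏ i, ‖w i‖ ^ (2 * α i) :=
  Finset.prod_nonneg fun i _ => pow_nonneg (norm_nonneg _) _

private lemma phi_cont : Continuous fun w : Fin n → ℂ => ∏ i, ‖w i‖ ^ (2 * α i) :=
  continuous_finset_prod _ fun i _ => ((continuous_apply i).norm.pow _)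

private lemma q_cont : Continuous fun w : Fin n → ℂ => ∑ i, ‖w i‖ ^ 2 :=
  continuous_finset_sum _ fun i _ => ((continuous_apply i).norm.pow _)

private lemma q_nonneg (w : Fin n → ℂ) : 0 ≤ ∑ i, ‖w i‖ ^ 2 :=
  Finset.sum_nonneg fun i _ => pow_nonneg (norm_nonneg _) _

private lemma ball_meas (T : ℝ) : MeasurableSet {w : Fin n → ℂ | ∑ i, ‖w i‖ ^ 2 < T} :=
  (isOpen_lt q_cont continuous_const).measurableSet

private lemma phi_intOn (T : ℝ) :
    IntegrableOn (fun w : Fin n → ℂ => ∏ i, ‖w i‖ ^ (2 * α i))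
      {w | ∑ i, ‖w i‖ ^ 2 < T} := by
  have hsub : {w : Fin n → ℂ | ∑ i, ‖w i‖ ^ 2 < T} ⊆ Metric.closedBall 0 (Real.sqrt T) := by
    intro w hw
    rw [Metric.mem_closedBall, dist_zero_right,
      pi_norm_le_iff_of_nonneg (Real.sqrt_nonneg T)]
    intro i
    have h1 : ‖w i‖ ^ 2 ≤ ∑ j, ‖w j‖ ^ 2 :=
      Finset.single_le_sum (f := fun j => ‖w j‖ ^ 2) (fun j _ => by positivity)
        (Finset.mem_univ i)
    have h2 : ‖w i‖ ^ 2 ≤ T := h1.trans hw.le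
    calc ‖w i‖ = Real.sqrt (‖w i‖ ^ 2) := (Real.sqrt_sq (norm_nonneg _)).symm
    _ ≤ Real.sqrt T := Real.sqrt_le_sqrt h2
  exact (ContinuousOn.integrableOn_compact (isCompact_closedBall _ _)
    (phi_cont α).continuousOn).mono_set hsub

private lemma gauss_dim_one (k : ℕ) :
    ∫ z : ℂ, ‖z‖ ^ (2 * k) * rexp (-‖z‖ ^ 2) = π * Real.Gamma ((k : ℝ) + 1) := by
  have h := Complex.integral_rpow_mul_exp_neg_rpow (p := 2) (q := 2 * (k : ℝ)) one_le_two
    (by have : (0 : ℝ) ≤ 2 * (k : ℝ) := by positivity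
        linarith)
  rw [show ((2 * (k : ℝ)) + 2) / 2 = (k : ℝ) + 1 by ring,
    show (2 * π / 2 : ℝ) = π by ring] at h
  rw [← h]
  refine integral_congr_ae (Eventually.of_forall fun z => ?_)
  show ‖z‖ ^ (2 * k) * rexp (-‖z‖ ^ 2) = ‖z‖ ^ (2 * (k : ℝ)) * rexp (-‖z‖ ^ (2 : ℝ))
  rw [show (2 : ℝ) * (k : ℝ) = ((2 * k : ℕ) : ℝ) by push_cast; ring, Real.rpow_natCast,
    show (2 : ℝ) = ((2 : ℕ) : ℝ) by norm_num, Real.rpow_natCast]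

private lemma gauss_dim_one_integrable (k : ℕ) :
    Integrable (fun z : ℂ => ‖z‖ ^ (2 * k) * rexp (-‖z‖ ^ 2)) := by
  have h1 : Integrable (fun x : ℝ => (1 + x ^ 2) ^ k * rexp (-x ^ 2)) := by
    have expand : ∀ x : ℝ, (1 + x ^ 2) ^ k * rexp (-x ^ 2)
        = ∑ j ∈ Finset.range (k + 1), (k.choose j : ℝ) * (x ^ (2 * j) * rexp (-x ^ 2)) := by
      intro x
      rw [add_comm (1 : ℝ), add_pow, Finset.sum_mul]
      refine Finset.sum_congr rfl fun j hj => ?_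
      rw [one_pow, mul_one, ← pow_mul]
      ring
    simp only [expand]
    refine integrable_finset_sum _ fun j _ => ?_
    have h := integrable_rpow_mul_exp_neg_mul_sq (b := 1) one_pos (s := ((2 * j : ℕ) : ℝ))
      (by have : (0 : ℝ) ≤ ((2 * j : ℕ) : ℝ) := by positivity
          linarith)
    simp only [Real.rpow_natCast, neg_one_mul] at h
    exact MeasureTheory.Integrable.const_mul h _
  have h2 : Integrable (fun q : ℝ × ℝ =>
      ((1 + q.1 ^ 2) ^ k * rexp (-q.1 ^ 2)) * ((1 + q.2 ^ 2) ^ k * rexp (-q.2 ^ 2))) := by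
    rw [Measure.volume_eq_prod]
    exact h1.mul_prod h1
  have h3 : Integrable (fun z : ℂ =>
      ((1 + z.re ^ 2) ^ k * rexp (-z.re ^ 2)) * ((1 + z.im ^ 2) ^ k * rexp (-z.im ^ 2))) := by
    have h := (Complex.volume_preserving_equiv_real_prod.integrable_comp_emb
      Complex.measurableEquivRealProd.measurableEmbedding (g := fun q : ℝ × ℝ =>
      ((1 + q.1 ^ 2) ^ k * rexp (-q.1 ^ 2)) * ((1 + q.2 ^ 2) ^ k * rexp (-q.2 ^ 2)))).mpr h2
    simpa [Function.comp_def] using h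
  refine h3.mono' ?_ ?_
  · exact (((continuous_norm.pow (2 * k)).mul
      (((continuous_norm.pow 2).neg).rexp)).aestronglyMeasurable)
  · refine Eventually.of_forall fun z => ?_
    have hz : ‖z‖ ^ 2 = z.re ^ 2 + z.im ^ 2 := by
      rw [Complex.sq_norm, Complex.normSq_apply]; ring
    rw [Real.norm_eq_abs, abs_of_nonneg (by positivity)]
    have hle : (z.re ^ 2 + z.im ^ 2) ^ k ≤ ((1 + z.re ^ 2) * (1 + z.im ^ 2)) ^ k := by
      refine pow_le_pow_left₀ (by positivity) ?_ k
      nlinarith [sq_nonneg z.re, sq_nonneg z.im, sq_nonneg (z.re * z.im)]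
    calc ‖z‖ ^ (2 * k) * rexp (-‖z‖ ^ 2)
        = (z.re ^ 2 + z.im ^ 2) ^ k * (rexp (-z.re ^ 2) * rexp (-z.im ^ 2)) := by
          rw [pow_mul, hz, ← Real.exp_add]; ring_nf
    _ ≤ ((1 + z.re ^ 2) * (1 + z.im ^ 2)) ^ k * (rexp (-z.re ^ 2) * rexp (-z.im ^ 2)) := by
          refine mul_le_mul_of_nonneg_right hle (by positivity)
    _ = ((1 + z.re ^ 2) ^ k * rexp (-z.re ^ 2)) * ((1 + z.im ^ 2) ^ k * rexp (-z.im ^ 2)) := by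
          rw [mul_pow]; ring

private lemma gauss_split (w : Fin n → ℂ) :
    (∏ i, ‖w i‖ ^ (2 * α i)) * rexp (-∑ i, ‖w i‖ ^ 2)
      = ∏ i, (‖w i‖ ^ (2 * α i) * rexp (-‖w i‖ ^ 2)) := by
  rw [Finset.prod_mul_distrib]
  congr 1
  rw [← Real.exp_sum]
  congr 1
  simp

private lemma gauss_prod :
    (∫ w : Fin n → ℂ, (∏ i, ‖w i‖ ^ (2 * α i)) * rexp (-∑ i, ‖w i‖ ^ 2))
      = π ^ n * ∏ i, Real.Gamma ((α i : ℝ) + 1) := by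
  simp only [gauss_split α]
  rw [MeasureTheory.volume_pi, MeasureTheory.integral_fintype_prod_eq_prod
      (f := fun i (z : ℂ) => ‖z‖ ^ (2 * α i) * rexp (-‖z‖ ^ 2))]
  rw [Finset.prod_congr rfl fun i _ => gauss_dim_one (α i), Finset.prod_mul_distrib,
    Finset.prod_const, Finset.card_univ, Fintype.card_fin]

private lemma gauss_prod_integrable :
    Integrable (fun w : Fin n → ℂ =>
      (∏ i, ‖w i‖ ^ (2 * α i)) * rexp (-∑ i, ‖w i‖ ^ 2)) := by
  simp only [gauss_split α]
  exact Integrable.fintype_prod (f := fun i (z : ℂ) => ‖z‖ ^ (2 * α i) * rexp (-‖z‖ ^ 2))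
    fun i => gauss_dim_one_integrable (α i)

private lemma scaling {c : ℝ} (hc : 0 < c) (T : ℝ) :
    ∫ w : Fin n → ℂ in {w | ∑ i, ‖w i‖ ^ 2 < c ^ 2 * T}, ∏ i, ‖w i‖ ^ (2 * α i)
      = c ^ (2 * ((∑ i, α i) + n)) *
        ∫ w : Fin n → ℂ in {w | ∑ i, ‖w i‖ ^ 2 < T}, ∏ i, ‖w i‖ ^ (2 * α i) := by
  have hrank : Module.finrank ℝ (Fin n → ℂ) = 2 * n := by
    simp [Module.finrank_pi_fintype, Complex.finrank_real_complex, mul_comm]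
  have h := MeasureTheory.Measure.integral_comp_smul (volume : Measure (Fin n → ℂ))
    (fun w => Set.indicator {w : Fin n → ℂ | ∑ i, ‖w i‖ ^ 2 < c ^ 2 * T}
      (fun w => ∏ i, ‖w i‖ ^ (2 * α i)) w) c
  rw [hrank] at h
  have hQ : ∀ x : Fin n → ℂ, (∑ i, ‖(c • x) i‖ ^ 2) = c ^ 2 * ∑ i, ‖x i‖ ^ 2 := by
    intro x
    rw [Finset.mul_sum]
    refine Finset.sum_congr rfl fun i _ => ?_
    rw [Pi.smul_apply, norm_smul, Real.norm_eq_abs, mul_pow, sq_abs]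
  have hphi : ∀ x : Fin n → ℂ, (∏ i, ‖(c • x) i‖ ^ (2 * α i))
      = c ^ (2 * ∑ i, α i) * ∏ i, ‖x i‖ ^ (2 * α i) := by
    intro x
    calc ∏ i, ‖(c • x) i‖ ^ (2 * α i)
        = ∏ i, (c ^ (2 * α i) * ‖x i‖ ^ (2 * α i)) := by
          refine Finset.prod_congr rfl fun i _ => ?_
          rw [Pi.smul_apply, norm_smul, Real.norm_eq_abs, mul_pow, abs_of_pos hc]
    _ = (∏ i, c ^ (2 * α i)) * ∏ i, ‖x i‖ ^ (2 * α i) := Finset.prod_mul_distrib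
    _ = c ^ (2 * ∑ i, α i) * ∏ i, ‖x i‖ ^ (2 * α i) := by
          rw [Finset.prod_pow_eq_pow_sum, ← Finset.mul_sum]
  have hpt : ∀ x : Fin n → ℂ,
      Set.indicator {w : Fin n → ℂ | ∑ i, ‖w i‖ ^ 2 < c ^ 2 * T}
        (fun w => ∏ i, ‖w i‖ ^ (2 * α i)) (c • x)
      = c ^ (2 * ∑ i, α i) * Set.indicator {w : Fin n → ℂ | ∑ i, ‖w i‖ ^ 2 < T}
        (fun w => ∏ i, ‖w i‖ ^ (2 * α i)) x := by
    intro x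
    by_cases hx : (∑ i, ‖x i‖ ^ 2) < T
    · rw [Set.indicator_of_mem
          (show x ∈ {w : Fin n → ℂ | ∑ i, ‖w i‖ ^ 2 < T} from hx),
        Set.indicator_of_mem
          (show c • x ∈ {w : Fin n → ℂ | ∑ i, ‖w i‖ ^ 2 < c ^ 2 * T} by
            show (∑ i, ‖(c • x) i‖ ^ 2) < c ^ 2 * T
            rw [hQ]
            exact mul_lt_mul_of_pos_left hx (by positivity)), hphi]
    · rw [Set.indicator_of_notMem
          (show x ∉ {w : Fin n → ℂ | ∑ i, ‖w i‖ ^ 2 < T} from hx),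
        Set.indicator_of_notMem
          (show c • x ∉ {w : Fin n → ℂ | ∑ i, ‖w i‖ ^ 2 < c ^ 2 * T} by
            show ¬ (∑ i, ‖(c • x) i‖ ^ 2) < c ^ 2 * T
            rw [hQ]
            intro hcon
            exact hx (lt_of_mul_lt_mul_left hcon (by positivity))), mul_zero]
  simp only [hpt] at h
  rw [MeasureTheory.integral_const_mul, MeasureTheory.integral_indicator (ball_meas _),
    MeasureTheory.integral_indicator (ball_meas _), abs_of_pos (by positivity : (0:ℝ) <
      (c ^ (2 * n))⁻¹), smul_eq_mul] at h
  have hc2n : (c : ℝ) ^ (2 * n) ≠ 0 := by positivity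
  rw [inv_mul_eq_div, eq_div_iff hc2n] at h
  rw [show 2 * ((∑ i, α i) + n) = 2 * (∑ i, α i) + 2 * n by ring, pow_add, ← h]
  ring

private lemma tail_int {a : ℝ} (ha : 0 ≤ a) :
    IntegrableOn (fun r : ℝ => 2 * r * rexp (-r ^ 2)) (Set.Ioi a) := by
  have h := integrableOn_rpow_mul_exp_neg_mul_sq (b := 1) one_pos (s := (1 : ℝ)) (by norm_num)
  simp only [Real.rpow_one, neg_one_mul] at h
  have h2 : IntegrableOn (fun r : ℝ => 2 * (r * rexp (-r ^ 2))) (Set.Ioi 0) := h.const_mul 2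
  have h3 : IntegrableOn (fun r : ℝ => 2 * r * rexp (-r ^ 2)) (Set.Ioi 0) := by
    simpa [mul_assoc] using h2
  exact h3.mono_set (Set.Ioi_subset_Ioi ha)

private lemma exp_tail {a : ℝ} (ha : 0 ≤ a) :
    ∫ r in Set.Ioi a, 2 * r * rexp (-r ^ 2) = rexp (-a ^ 2) := by
  have hderiv : ∀ x ∈ Set.Ioi a,
      HasDerivAt (fun r : ℝ => -rexp (-r ^ 2)) (2 * x * rexp (-x ^ 2)) x := by
    intro x _
    have h1 : HasDerivAt (fun r : ℝ => -r ^ 2) (-(2 * x)) x := by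
      have h0 : HasDerivAt (fun r : ℝ => r ^ 2) (2 * x) x := by simpa using hasDerivAt_pow 2 x
      exact h0.neg
    have h2 : HasDerivAt (fun r : ℝ => -rexp (-r ^ 2)) (-(rexp (-x ^ 2) * -(2 * x))) x :=
      (h1.exp).neg
    convert h2 using 1
    ring
  have htend : Tendsto (fun r : ℝ => -rexp (-r ^ 2)) atTop (nhds 0) := by
    rw [show (0 : ℝ) = -0 by ring]
    exact (Real.tendsto_exp_neg_atTop_nhds_zero.comp
      (tendsto_pow_atTop two_ne_zero)).neg
  have hcont : ContinuousWithinAt (fun r : ℝ => -rexp (-r ^ 2)) (Set.Ici a) a :=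
    Continuous.continuousWithinAt (by fun_prop)
  rw [MeasureTheory.integral_Ioi_of_hasDerivAt_of_tendsto hcont hderiv (tail_int ha) htend]
  simp

private lemma radial_int (j : ℕ) :
    IntegrableOn (fun r : ℝ => r ^ j * rexp (-r ^ 2)) (Set.Ioi 0) := by
  have h := integrableOn_rpow_mul_exp_neg_mul_sq (b := 1) one_pos (s := ((j : ℕ) : ℝ))
    (by have : (0 : ℝ) ≤ ((j : ℕ) : ℝ) := by positivity
        linarith)
  simpa [Real.rpow_natCast, neg_one_mul] using h

private lemma radial_val (j : ℕ) :
    ∫ r in Set.Ioi (0:ℝ), r ^ j * rexp (-r ^ 2)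
      = (1 / 2) * Real.Gamma (((j : ℝ) + 1) / 2) := by
  have h := integral_rpow_mul_exp_neg_rpow (p := 2) (q := (j : ℝ)) two_pos
    (by have : (0 : ℝ) ≤ ((j : ℕ) : ℝ) := by positivity
        linarith)
  rw [← h]
  refine MeasureTheory.setIntegral_congr_fun measurableSet_Ioi fun x hx => ?_
  rw [Real.rpow_natCast, show (2 : ℝ) = ((2 : ℕ) : ℝ) by norm_num, Real.rpow_natCast]


private noncomputable def Hfun (n : ℕ) (α : Fin n → ℕ) : ((Fin n → ℂ) × ℝ) → ENNReal :=
  fun x => Set.indicator {y : (Fin n → ℂ) × ℝ | ∑ i, ‖y.1 i‖ ^ 2 < y.2 ^ 2}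
    (fun y => ENNReal.ofReal ((∏ i, ‖y.1 i‖ ^ (2 * α i)) * (2 * y.2 * rexp (-y.2 ^ 2)))) x

private lemma Hfun_meas : Measurable (Hfun n α) := by
  refine Measurable.indicator ?_ ?_
  · refine (ENNReal.continuous_ofReal.comp ?_).measurable
    exact ((phi_cont α).comp continuous_fst).mul
      ((continuous_const.mul continuous_snd).mul ((continuous_snd.pow 2).neg.rexp))
  · exact (isOpen_lt (q_cont.comp continuous_fst) (continuous_snd.pow 2)).measurableSet

private lemma stepB (w : Fin n → ℂ) :
    ENNReal.ofReal ((∏ i, ‖w i‖ ^ (2 * α i)) * rexp (-∑ i, ‖w i‖ ^ 2))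
      = ∫⁻ r in Set.Ioi (0:ℝ), Hfun n α (w, r) := by
  have hq0 : 0 ≤ ∑ i, ‖w i‖ ^ 2 := q_nonneg w
  have ha0 : 0 ≤ Real.sqrt (∑ i, ‖w i‖ ^ 2) := Real.sqrt_nonneg _
  have h1 : ∫⁻ r in Set.Ioi (0:ℝ), Hfun n α (w, r)
      = ∫⁻ r in Set.Ioi (0:ℝ), (Set.Ioi (Real.sqrt (∑ i, ‖w i‖ ^ 2))).indicator
          (fun r => ENNReal.ofReal ((∏ i, ‖w i‖ ^ (2 * α i)) * (2 * r * rexp (-r ^ 2)))) r := by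
    refine setLIntegral_congr_fun measurableSet_Ioi (fun r hr => ?_)
    simp only [Hfun]
    by_cases hmem : (∑ i, ‖w i‖ ^ 2) < r ^ 2
    · rw [Set.indicator_of_mem
          (show (w, r) ∈ {y : (Fin n → ℂ) × ℝ | ∑ i, ‖y.1 i‖ ^ 2 < y.2 ^ 2} from hmem),
        Set.indicator_of_mem (show r ∈ Set.Ioi (Real.sqrt (∑ i, ‖w i‖ ^ 2)) from
          (Real.sqrt_lt' hr).mpr hmem)]
    · rw [Set.indicator_of_notMem
          (show (w, r) ∉ {y : (Fin n → ℂ) × ℝ | ∑ i, ‖y.1 i‖ ^ 2 < y.2 ^ 2} from hmem),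
        Set.indicator_of_notMem (show r ∉ Set.Ioi (Real.sqrt (∑ i, ‖w i‖ ^ 2)) from
          fun hcon => hmem ((Real.sqrt_lt' hr).mp hcon))]
  have hnn : 0 ≤ᵐ[volume.restrict (Set.Ioi (Real.sqrt (∑ i, ‖w i‖ ^ 2)))]
      fun r => (∏ i, ‖w i‖ ^ (2 * α i)) * (2 * r * rexp (-r ^ 2)) := by
    filter_upwards [ae_restrict_mem measurableSet_Ioi] with r hr
    have hr0 : 0 < r := lt_of_le_of_lt ha0 hr
    exact mul_nonneg (phi_nonneg α w)
      (mul_nonneg (by linarith) (Real.exp_nonneg _))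
  rw [h1, lintegral_indicator measurableSet_Ioi, Measure.restrict_restrict measurableSet_Ioi,
    Set.Ioi_inter_Ioi, sup_eq_left.mpr ha0,
    ← ofReal_integral_eq_lintegral_ofReal (Integrable.const_mul (tail_int ha0) _) hnn,
    MeasureTheory.integral_const_mul, exp_tail ha0, Real.sq_sqrt hq0]

private lemma stepD {r : ℝ} (hr : 0 < r) :
    ∫⁻ w : Fin n → ℂ, Hfun n α (w, r)
      = ENNReal.ofReal ((r ^ (2 * ((∑ i, α i) + n) + 1) * rexp (-r ^ 2)) *
          (2 * ∫ w : Fin n → ℂ in {w | ∑ i, ‖w i‖ ^ 2 < 1}, ∏ i, ‖w i‖ ^ (2 * α i))) := by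
  have hsc := scaling α hr 1
  rw [mul_one] at hsc
  have hslice : ∀ w : Fin n → ℂ, Hfun n α (w, r)
      = Set.indicator {w : Fin n → ℂ | ∑ i, ‖w i‖ ^ 2 < r ^ 2}
        (fun w => ENNReal.ofReal ((∏ i, ‖w i‖ ^ (2 * α i)) * (2 * r * rexp (-r ^ 2)))) w :=
    fun w => rfl
  simp only [hslice]
  rw [lintegral_indicator (ball_meas _),
    ← ofReal_integral_eq_lintegral_ofReal
      ((phi_intOn α (r ^ 2)).mul_const _)
      (Eventually.of_forall fun w => mul_nonneg (phi_nonneg α w)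
        (mul_nonneg (by linarith) (Real.exp_nonneg _))),
    MeasureTheory.integral_mul_const, hsc]
  congr 1
  ring

private lemma key {T : ℝ} (hT : 0 < T) :
    ∫ w : Fin n → ℂ in {w | ∑ i, ‖w i‖ ^ 2 < T}, ∏ i, ‖w i‖ ^ (2 * α i)
      = π ^ n * (∏ i, Real.Gamma ((α i : ℝ) + 1)) * T ^ ((∑ i, α i) + n)
        / Real.Gamma ((((∑ i, α i) + n : ℕ) : ℝ) + 1) := by
  have hGpos : 0 < π ^ n * ∏ i, Real.Gamma ((α i : ℝ) + 1) :=
    mul_pos (pow_pos Real.pi_pos n) (Finset.prod_pos fun i _ =>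
      Real.Gamma_pos_of_pos (by positivity))
  have hΓpos : 0 < Real.Gamma ((((∑ i, α i) + n : ℕ) : ℝ) + 1) :=
    Real.Gamma_pos_of_pos (by positivity)
  have hI1nn : 0 ≤ ∫ w : Fin n → ℂ in {w | ∑ i, ‖w i‖ ^ 2 < 1}, ∏ i, ‖w i‖ ^ (2 * α i) :=
    setIntegral_nonneg (ball_meas _) fun w _ => phi_nonneg α w
  have claim : ENNReal.ofReal (π ^ n * ∏ i, Real.Gamma ((α i : ℝ) + 1))
      = ENNReal.ofReal (Real.Gamma ((((∑ i, α i) + n : ℕ) : ℝ) + 1) *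
          ∫ w : Fin n → ℂ in {w | ∑ i, ‖w i‖ ^ 2 < 1}, ∏ i, ‖w i‖ ^ (2 * α i)) := by
    calc ENNReal.ofReal (π ^ n * ∏ i, Real.Gamma ((α i : ℝ) + 1))
        = ENNReal.ofReal (∫ w : Fin n → ℂ,
            (∏ i, ‖w i‖ ^ (2 * α i)) * rexp (-∑ i, ‖w i‖ ^ 2)) := by rw [gauss_prod]
      _ = ∫⁻ w : Fin n → ℂ, ENNReal.ofReal
            ((∏ i, ‖w i‖ ^ (2 * α i)) * rexp (-∑ i, ‖w i‖ ^ 2)) :=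
          ofReal_integral_eq_lintegral_ofReal (gauss_prod_integrable α)
            (Eventually.of_forall fun w => mul_nonneg (phi_nonneg α w) (Real.exp_nonneg _))
      _ = ∫⁻ w : Fin n → ℂ, ∫⁻ r in Set.Ioi (0:ℝ), Hfun n α (w, r) :=
          lintegral_congr fun w => stepB α w
      _ = ∫⁻ r in Set.Ioi (0:ℝ), ∫⁻ w : Fin n → ℂ, Hfun n α (w, r) :=
          lintegral_lintegral_swap (Hfun_meas α).aemeasurable
      _ = ∫⁻ r in Set.Ioi (0:ℝ), ENNReal.ofReal
            ((r ^ (2 * ((∑ i, α i) + n) + 1) * rexp (-r ^ 2)) *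
              (2 * ∫ w : Fin n → ℂ in {w | ∑ i, ‖w i‖ ^ 2 < 1}, ∏ i, ‖w i‖ ^ (2 * α i))) :=
          setLIntegral_congr_fun measurableSet_Ioi
            (fun r hr => stepD α hr)
      _ = ENNReal.ofReal (∫ r in Set.Ioi (0:ℝ),
            (r ^ (2 * ((∑ i, α i) + n) + 1) * rexp (-r ^ 2)) *
              (2 * ∫ w : Fin n → ℂ in {w | ∑ i, ‖w i‖ ^ 2 < 1}, ∏ i, ‖w i‖ ^ (2 * α i))) :=
          (ofReal_integral_eq_lintegral_ofReal
            ((radial_int _).mul_const _)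
            (by filter_upwards [ae_restrict_mem measurableSet_Ioi] with r hr
                have hr0 : (0:ℝ) < r := hr
                exact mul_nonneg (mul_nonneg (pow_nonneg hr0.le _) (Real.exp_nonneg _))
                  (mul_nonneg (by norm_num) hI1nn))).symm
      _ = ENNReal.ofReal (Real.Gamma ((((∑ i, α i) + n : ℕ) : ℝ) + 1) *
            ∫ w : Fin n → ℂ in {w | ∑ i, ‖w i‖ ^ 2 < 1}, ∏ i, ‖w i‖ ^ (2 * α i)) := by
          rw [MeasureTheory.integral_mul_const, radial_val]
          congr 1
          rw [show (((2 * ((∑ i, α i) + n) + 1 : ℕ) : ℝ) + 1) / 2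
              = (((∑ i, α i) + n : ℕ) : ℝ) + 1 by push_cast; ring]
          ring
  have h := (ENNReal.ofReal_eq_ofReal_iff hGpos.le
    (mul_nonneg hΓpos.le hI1nn)).mp claim
  have hI1 : ∫ w : Fin n → ℂ in {w | ∑ i, ‖w i‖ ^ 2 < 1}, ∏ i, ‖w i‖ ^ (2 * α i)
      = π ^ n * (∏ i, Real.Gamma ((α i : ℝ) + 1)) /
        Real.Gamma ((((∑ i, α i) + n : ℕ) : ℝ) + 1) := by
    rw [eq_div_iff hΓpos.ne']
    linear_combination -h
  have hsc := scaling α (Real.sqrt_pos.mpr hT) 1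
  rw [mul_one, Real.sq_sqrt hT.le] at hsc
  rw [hsc, hI1,
    show Real.sqrt T ^ (2 * ((∑ i, α i) + n)) = T ^ ((∑ i, α i) + n) by
      rw [pow_mul, Real.sq_sqrt hT.le]]
  ring

end MonomialSublevelAux

/-- The single-block monomial integral: for `p > 0`, `α ∈ ℕⁿ`, `t > 0`,
`∫_{‖w‖^{2p} < t} |w^α|² dV(w)
  = πⁿ (∏ Γ(αᵢ+1)) Γ((|α|+n)/p) / (p Γ(|α|+n) Γ((|α|+n)/p + 1)) · t^{(|α|+n)/p}`. -/
theorem integral_monomial_sublevel (n : ℕ) (hn : 0 < n) (p t : ℝ) (hp : 0 < p)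
    (ht : 0 < t) (α : Fin n → ℕ) :
    ∫ w in {w : EuclideanSpace ℂ (Fin n) | ‖w‖ ^ (2 * p) < t},
        ‖∏ i, w i ^ α i‖ ^ 2 =
      π ^ n * (∏ i, Real.Gamma ((α i : ℝ) + 1)) *
          Real.Gamma (((∑ i, (α i : ℝ)) + n) / p) /
        (p * Real.Gamma ((∑ i, (α i : ℝ)) + n) *
          Real.Gamma (((∑ i, (α i : ℝ)) + n) / p + 1)) *
        t ^ (((∑ i, (α i : ℝ)) + n) / p) := by
  classical
  have hT : 0 < t ^ p⁻¹ := Real.rpow_pos_of_pos ht _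
  have hset : {w : EuclideanSpace ℂ (Fin n) | ‖w‖ ^ (2 * p) < t}
      = {w : EuclideanSpace ℂ (Fin n) | ∑ i, ‖w i‖ ^ 2 < t ^ p⁻¹} := by
    ext w
    simp only [Set.mem_setOf_eq]
    have hq0 : (0:ℝ) ≤ ∑ i, ‖w i‖ ^ 2 :=
      Finset.sum_nonneg fun i _ => pow_nonneg (norm_nonneg _) _
    have hnorm : ‖w‖ ^ (2 * p) = (∑ i, ‖w i‖ ^ 2) ^ p := by
      rw [Real.rpow_mul (norm_nonneg w)]
      congr 1
      rw [show ‖w‖ ^ (2:ℝ) = ‖w‖ ^ (2:ℕ) by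
          rw [show (2:ℝ) = ((2:ℕ):ℝ) by norm_num, Real.rpow_natCast],
        EuclideanSpace.norm_eq, Real.sq_sqrt hq0]
    rw [hnorm]
    exact (Real.lt_rpow_inv_iff_of_pos hq0 ht.le hp).symm
  have hfun : ∀ w : EuclideanSpace ℂ (Fin n),
      ‖∏ i, w i ^ α i‖ ^ 2 = ∏ i, ‖w i‖ ^ (2 * α i) := by
    intro w
    rw [norm_prod, ← Finset.prod_pow]
    refine Finset.prod_congr rfl fun i _ => ?_
    rw [norm_pow, ← pow_mul, mul_comm]
  rw [hset]
  simp only [hfun]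
  have hEpi : (∫ w in {w : EuclideanSpace ℂ (Fin n) | ∑ i, ‖w i‖ ^ 2 < t ^ p⁻¹},
        ∏ i, ‖w i‖ ^ (2 * α i))
      = ∫ w : Fin n → ℂ in {w | ∑ i, ‖w i‖ ^ 2 < t ^ p⁻¹}, ∏ i, ‖w i‖ ^ (2 * α i) := by
    show ∫ w in _, _ ∂(Measure.map (WithLp.toLp 2) (volume : Measure (Fin n → ℂ))) = _
    rw [← MeasurableEquiv.coe_toLp,
      (MeasurableEquiv.toLp 2 (Fin n → ℂ)).measurableEmbedding.setIntegral_map]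
    rfl
  rw [hEpi, MonomialSublevelAux.key α hT]
  set M : ℝ := (∑ i, (α i : ℝ)) + n with hM
  have hcast : ((((∑ i, α i) + n : ℕ)) : ℝ) = M := by rw [hM]; push_cast; ring
  have hMpos : 0 < M := by
    rw [hM]
    have h1 : (0:ℝ) < n := by exact_mod_cast hn
    have h2 : (0:ℝ) ≤ ∑ i, (α i : ℝ) := Finset.sum_nonneg fun i _ => by positivity
    linarith
  have hpow : (t ^ p⁻¹) ^ ((∑ i, α i) + n) = t ^ (M / p) := by
    rw [← Real.rpow_natCast (t ^ p⁻¹) ((∑ i, α i) + n), ← Real.rpow_mul ht.le, hcast,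
      inv_mul_eq_div]
  rw [hpow, hcast]
  have hg1 : Real.Gamma (M + 1) = M * Real.Gamma M := Real.Gamma_add_one hMpos.ne'
  have hg2 : Real.Gamma (M / p + 1) = (M / p) * Real.Gamma (M / p) :=
    Real.Gamma_add_one (div_pos hMpos hp).ne'
  have hgM : 0 < Real.Gamma M := Real.Gamma_pos_of_pos hMpos
  have hgMp : 0 < Real.Gamma (M / p) := Real.Gamma_pos_of_pos (div_pos hMpos hp)
  rw [hg1, hg2]
  have htp : 0 < t ^ (M / p) := Real.rpow_pos_of_pos ht _
  field_simp
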